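/- Let α ∈ (0,2), let w̃^k be the output of the parallel splitting ALM step with input ξ^k, and let ξ^{k+1} = ξ^k − αℳ(ξ^k − ξ̃^k). Then ‖ξ^k − ξ^{k+1}‖²_ℋ = α²‖ξ^k − ξ̃^k‖²_𝒟, and consequently for every ξ* ∈ Ξ*: ‖ξ^{k+1} − ξ*‖²_ℋ ≤ ‖ξ^k − ξ*‖²_ℋ − ((2 − α)/α)‖ξ^k − ξ^{k+1}‖²_ℋ. -/

import Mathlib

open Matrix
open scoped Kronecker

noncomputable section

/-- `Q₀ = [β I_p, e_p; −e_pᵀ, 1/β]`. -/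
def Q0 (p : ℕ) (β : ℝ) : Matrix (Fin p ⊕ Unit) (Fin p ⊕ Unit) ℝ :=
  Matrix.fromBlocks (β • (1 : Matrix (Fin p) (Fin p) ℝ))
    (Matrix.of fun _ _ => (1 : ℝ))
    (Matrix.of fun _ _ => (-1 : ℝ))
    (Matrix.of fun _ _ => 1 / β)

/-- `D₀ = diag(β, …, β, 1/β)`. -/
def D0 (p : ℕ) (β : ℝ) : Matrix (Fin p ⊕ Unit) (Fin p ⊕ Unit) ℝ :=
  Matrix.fromBlocks (β • (1 : Matrix (Fin p) (Fin p) ℝ)) 0 0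
    (Matrix.of fun _ _ => 1 / β)

/-- `M₀ = I_{p+1} − (1/(p+1))·[e_p e_pᵀ, −(1/β)e_p; β e_pᵀ, p]`. -/
def M0 (p : ℕ) (β : ℝ) : Matrix (Fin p ⊕ Unit) (Fin p ⊕ Unit) ℝ :=
  1 - (1 / (p + 1 : ℝ)) •
    Matrix.fromBlocks (Matrix.of fun _ _ => (1 : ℝ))
      (Matrix.of fun _ _ => -(1 / β))
      (Matrix.of fun _ _ => (β : ℝ))
      (Matrix.of fun _ _ => (p : ℝ))

/-- `H₀ = [β(I_p + e_p e_pᵀ), 0; 0, (p+1)/β]`. -/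
def H0 (p : ℕ) (β : ℝ) : Matrix (Fin p ⊕ Unit) (Fin p ⊕ Unit) ℝ :=
  Matrix.fromBlocks (β • ((1 : Matrix (Fin p) (Fin p) ℝ) + Matrix.of fun _ _ => (1 : ℝ))) 0 0
    (Matrix.of fun _ _ => (p + 1 : ℝ) / β)

/-- `𝒬 = Q₀ ⊗ I_m`. -/
def calQ (p m : ℕ) (β : ℝ) : Matrix ((Fin p ⊕ Unit) × Fin m) ((Fin p ⊕ Unit) × Fin m) ℝ :=
  Q0 p β ⊗ₖ (1 : Matrix (Fin m) (Fin m) ℝ)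

/-- `𝒟 = D₀ ⊗ I_m`. -/
def calD (p m : ℕ) (β : ℝ) : Matrix ((Fin p ⊕ Unit) × Fin m) ((Fin p ⊕ Unit) × Fin m) ℝ :=
  D0 p β ⊗ₖ (1 : Matrix (Fin m) (Fin m) ℝ)

/-- `ℳ = M₀ ⊗ I_m`. -/
def calM (p m : ℕ) (β : ℝ) : Matrix ((Fin p ⊕ Unit) × Fin m) ((Fin p ⊕ Unit) × Fin m) ℝ :=
  M0 p β ⊗ₖ (1 : Matrix (Fin m) (Fin m) ℝ)

/-- `ℋ = H₀ ⊗ I_m`. -/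
def calH (p m : ℕ) (β : ℝ) : Matrix ((Fin p ⊕ Unit) × Fin m) ((Fin p ⊕ Unit) × Fin m) ℝ :=
  H0 p β ⊗ₖ (1 : Matrix (Fin m) (Fin m) ℝ)

/-- `‖v‖²_G = vᵀ G v`. -/
def nsq {p m : ℕ} (G : Matrix ((Fin p ⊕ Unit) × Fin m) ((Fin p ⊕ Unit) × Fin m) ℝ)
    (v : (Fin p ⊕ Unit) × Fin m → ℝ) : ℝ :=
  v ⬝ᵥ G.mulVec v

/-- `θ(x) = Σ_i θ_i(x_i)`. -/
def thetaSum {p : ℕ} {n : Fin p → ℕ} (θ : (i : Fin p) → (Fin (n i) → ℝ) → ℝ)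
    (x : (i : Fin p) → Fin (n i) → ℝ) : ℝ :=
  ∑ i, θ i (x i)

/-- The Euclidean inner product on `ℝ^{n_1}×⋯×ℝ^{n_p}×ℝ^m`. -/
def dotW {p m : ℕ} {n : Fin p → ℕ}
    (w w' : ((i : Fin p) → Fin (n i) → ℝ) × (Fin m → ℝ)) : ℝ :=
  (∑ i, w.1 i ⬝ᵥ w'.1 i) + w.2 ⬝ᵥ w'.2

/-- `F(w) = (−A_1ᵀλ, …, −A_pᵀλ, Σ_i A_i x_i − b)`. -/
def Fop {p m : ℕ} {n : Fin p → ℕ} (A : (i : Fin p) → Matrix (Fin m) (Fin (n i)) ℝ)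
    (b : Fin m → ℝ) (w : ((i : Fin p) → Fin (n i) → ℝ) × (Fin m → ℝ)) :
    ((i : Fin p) → Fin (n i) → ℝ) × (Fin m → ℝ) :=
  (fun i => -((A i)ᵀ.mulVec w.2), (∑ i, (A i).mulVec (w.1 i)) - b)

/-- `Pw = (A_1 x_1, …, A_p x_p, λ) ∈ ℝ^{(p+1)m}`. -/
def Pmap {p m : ℕ} {n : Fin p → ℕ} (A : (i : Fin p) → Matrix (Fin m) (Fin (n i)) ℝ)
    (w : ((i : Fin p) → Fin (n i) → ℝ) × (Fin m → ℝ)) :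
    (Fin p ⊕ Unit) × Fin m → ℝ :=
  fun q => Sum.elim (fun i => (A i).mulVec (w.1 i) q.2) (fun _ => w.2 q.2) q.1

/-- `Ω = 𝒳_1 × ⋯ × 𝒳_p × ℝ^m`. -/
def OmegaSet {p : ℕ} (m : ℕ) {n : Fin p → ℕ} (X : (i : Fin p) → Set (Fin (n i) → ℝ)) :
    Set (((i : Fin p) → Fin (n i) → ℝ) × (Fin m → ℝ)) :=
  {w | ∀ i, w.1 i ∈ X i}

/-- The solution set `Ω*` of the variational inequality VI(Ω,F,θ). -/
def VIsol {p m : ℕ} {n : Fin p → ℕ} (θ : (i : Fin p) → (Fin (n i) → ℝ) → ℝ)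
    (X : (i : Fin p) → Set (Fin (n i) → ℝ))
    (A : (i : Fin p) → Matrix (Fin m) (Fin (n i)) ℝ) (b : Fin m → ℝ) :
    Set (((i : Fin p) → Fin (n i) → ℝ) × (Fin m → ℝ)) :=
  {ws | ws ∈ OmegaSet m X ∧ ∀ w ∈ OmegaSet m X,
    thetaSum θ w.1 - thetaSum θ ws.1 + dotW (w - ws) (Fop A b ws) ≥ 0}

/-- The `λ`-component of `ξ = (u_1, …, u_p, λ)`. -/
def lamOf {p m : ℕ} (ξ : (Fin p ⊕ Unit) × Fin m → ℝ) : Fin m → ℝ :=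
  fun j => ξ (Sum.inr (), j)

/-- The `u_i`-component of `ξ = (u_1, …, u_p, λ)`. -/
def uOf {p m : ℕ} (ξ : (Fin p ⊕ Unit) × Fin m → ℝ) (i : Fin p) : Fin m → ℝ :=
  fun j => ξ (Sum.inl i, j)

/-- The parallel splitting ALM step: with input `ξ = (u_1, …, u_p, λ)` it produces
`w̃ = (x̃_1, …, x̃_p, λ̃)` where each `x̃_i ∈ 𝒳_i` minimizes
`x_i ↦ θ_i(x_i) − λᵀ A_i x_i + (β/2)‖A_i x_i − u_i‖²` over `𝒳_i`, and
`λ̃ = λ − β(Σ_i u_i − b)`. -/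
def ALMStep {p m : ℕ} {n : Fin p → ℕ} (β : ℝ) (θ : (i : Fin p) → (Fin (n i) → ℝ) → ℝ)
    (X : (i : Fin p) → Set (Fin (n i) → ℝ))
    (A : (i : Fin p) → Matrix (Fin m) (Fin (n i)) ℝ) (b : Fin m → ℝ)
    (ξ : (Fin p ⊕ Unit) × Fin m → ℝ)
    (wt : ((i : Fin p) → Fin (n i) → ℝ) × (Fin m → ℝ)) : Prop :=
  (∀ i, wt.1 i ∈ X i ∧ ∀ y ∈ X i,
      θ i (wt.1 i) - lamOf ξ ⬝ᵥ (A i).mulVec (wt.1 i) +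
          β / 2 * (((A i).mulVec (wt.1 i) - uOf ξ i) ⬝ᵥ ((A i).mulVec (wt.1 i) - uOf ξ i)) ≤
        θ i y - lamOf ξ ⬝ᵥ (A i).mulVec y +
          β / 2 * (((A i).mulVec y - uOf ξ i) ⬝ᵥ ((A i).mulVec y - uOf ξ i))) ∧
  wt.2 = lamOf ξ - β • ((∑ i, uOf ξ i) - b)



-- ===================== auxiliary lemmas =====================

section Aux

variable {p m : ℕ} {β : ℝ}

lemma Q0_mulVec (g : Fin p ⊕ Unit → ℝ) :
    (Q0 p β).mulVec g = Sum.elim (fun i => β * g (Sum.inl i) + g (Sum.inr ()))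
      (fun _ => 1 / β * g (Sum.inr ()) - ∑ i, g (Sum.inl i)) := by
  funext q
  cases q with
  | inl i =>
    simp [Q0, Matrix.mulVec, dotProduct, Fintype.sum_sum_type, Matrix.one_apply,
      ite_mul, Finset.sum_ite_eq, mul_ite]
  | inr u =>
    simp [Q0, Matrix.mulVec, dotProduct, Fintype.sum_sum_type, Finset.sum_neg_distrib]
    ring_nf

lemma D0_mulVec (g : Fin p ⊕ Unit → ℝ) :
    (D0 p β).mulVec g = Sum.elim (fun i => β * g (Sum.inl i))
      (fun _ => 1 / β * g (Sum.inr ())) := by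
  funext q
  cases q with
  | inl i =>
    simp [D0, Matrix.mulVec, dotProduct, Fintype.sum_sum_type, Matrix.one_apply,
      ite_mul, Finset.sum_ite_eq, mul_ite]
  | inr u =>
    simp [D0, Matrix.mulVec, dotProduct, Fintype.sum_sum_type]

lemma M0_mulVec (g : Fin p ⊕ Unit → ℝ) :
    (M0 p β).mulVec g = Sum.elim
      (fun i => g (Sum.inl i) - 1 / (p + 1 : ℝ) * ((∑ i, g (Sum.inl i)) - 1 / β * g (Sum.inr ())))
      (fun _ => g (Sum.inr ()) - 1 / (p + 1 : ℝ) * (β * (∑ i, g (Sum.inl i)) + p * g (Sum.inr ()))) := by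
  funext q
  cases q with
  | inl i =>
    simp only [M0, Matrix.mulVec, dotProduct, Fintype.sum_sum_type, Matrix.sub_apply,
      Matrix.smul_apply, Matrix.one_apply, Matrix.fromBlocks_apply₁₁, Matrix.fromBlocks_apply₁₂,
      Matrix.of_apply, smul_eq_mul, Sum.elim_inl, Finset.univ_unique, Finset.sum_singleton,
      Sum.inl.injEq, reduceCtorEq, if_false]
    rw [Finset.sum_congr rfl (fun i' _ => by ring :
      ∀ i' ∈ Finset.univ, ((if i = i' then (1:ℝ) else 0) - 1/(p+1:ℝ) * 1) * g (Sum.inl i')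
        = (if i = i' then (1:ℝ) else 0) * g (Sum.inl i') - 1/(p+1:ℝ) * g (Sum.inl i'))]
    rw [Finset.sum_sub_distrib, ← Finset.mul_sum]
    simp [ite_mul, Finset.sum_ite_eq]
    ring
  | inr u =>
    simp only [M0, Matrix.mulVec, dotProduct, Fintype.sum_sum_type, Matrix.sub_apply,
      Matrix.smul_apply, Matrix.one_apply, Matrix.fromBlocks_apply₂₁, Matrix.fromBlocks_apply₂₂,
      Matrix.of_apply, smul_eq_mul, Sum.elim_inr, Finset.univ_unique, Finset.sum_singleton,
      Sum.inr.injEq, reduceCtorEq, if_false, if_true]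
    rw [Finset.sum_congr rfl (fun i' _ => by ring :
      ∀ i' ∈ Finset.univ, ((0:ℝ) - 1/(p+1:ℝ) * β) * g (Sum.inl i')
        = -(1/(p+1:ℝ) * β * g (Sum.inl i')))]
    rw [Finset.sum_neg_distrib, ← Finset.mul_sum]
    ring

lemma H0_mulVec (g : Fin p ⊕ Unit → ℝ) :
    (H0 p β).mulVec g = Sum.elim
      (fun i => β * (g (Sum.inl i) + ∑ i', g (Sum.inl i')))
      (fun _ => (p + 1 : ℝ) / β * g (Sum.inr ())) := by
  funext q
  cases q with
  | inl i =>
    simp [H0, Matrix.mulVec, dotProduct, Fintype.sum_sum_type, Matrix.one_apply,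
      ite_mul, Finset.sum_ite_eq, mul_ite, add_mul, Finset.sum_add_distrib, mul_add, Finset.mul_sum]
  | inr u =>
    simp [H0, Matrix.mulVec, dotProduct, Fintype.sum_sum_type]

lemma dot_sum_type (a b : Fin p ⊕ Unit → ℝ) :
    a ⬝ᵥ b = (∑ i, a (Sum.inl i) * b (Sum.inl i)) + a (Sum.inr ()) * b (Sum.inr ()) := by
  simp [dotProduct, Fintype.sum_sum_type]

lemma I1 (hβ : β ≠ 0) (g : Fin p ⊕ Unit → ℝ) :
    (H0 p β).mulVec ((M0 p β).mulVec g) = (Q0 p β).mulVec g := by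
  have hp1 : (p : ℝ) + 1 ≠ 0 := by positivity
  rw [M0_mulVec, H0_mulVec, Q0_mulVec]
  funext q
  cases q with
  | inl i =>
    simp only [Sum.elim_inl, Sum.elim_inr]
    rw [Finset.sum_sub_distrib, Finset.sum_const, Finset.card_univ, Fintype.card_fin,
      nsmul_eq_mul]
    field_simp
    ring
  | inr u =>
    simp only [Sum.elim_inl, Sum.elim_inr]
    field_simp
    ring

lemma I3 (a g : Fin p ⊕ Unit → ℝ) :
    a ⬝ᵥ (H0 p β).mulVec g = g ⬝ᵥ (H0 p β).mulVec a := by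
  rw [H0_mulVec, H0_mulVec, dot_sum_type, dot_sum_type]
  simp only [Sum.elim_inl, Sum.elim_inr]
  rw [Finset.sum_congr rfl (fun i _ => by ring :
    ∀ i ∈ Finset.univ, a (Sum.inl i) * (β * (g (Sum.inl i) + ∑ i', g (Sum.inl i')))
      = β * (a (Sum.inl i) * g (Sum.inl i)) + β * ((∑ i', g (Sum.inl i')) * a (Sum.inl i)))]
  rw [Finset.sum_congr rfl (fun i _ => by ring :
    ∀ i ∈ Finset.univ, g (Sum.inl i) * (β * (a (Sum.inl i) + ∑ i', a (Sum.inl i')))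
      = β * (a (Sum.inl i) * g (Sum.inl i)) + β * ((∑ i', a (Sum.inl i')) * g (Sum.inl i)))]
  rw [Finset.sum_add_distrib, Finset.sum_add_distrib]
  simp only [← Finset.mul_sum]
  ring

lemma I4 (g : Fin p ⊕ Unit → ℝ) :
    g ⬝ᵥ (Q0 p β).mulVec g = g ⬝ᵥ (D0 p β).mulVec g := by
  rw [Q0_mulVec, D0_mulVec, dot_sum_type, dot_sum_type]
  simp only [Sum.elim_inl, Sum.elim_inr]
  rw [Finset.sum_congr rfl (fun i _ => by ring :
    ∀ i ∈ Finset.univ, g (Sum.inl i) * (β * g (Sum.inl i) + g (Sum.inr ()))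
      = g (Sum.inl i) * (β * g (Sum.inl i)) + g (Sum.inr ()) * g (Sum.inl i))]
  rw [Finset.sum_add_distrib, ← Finset.mul_sum]
  ring

lemma I2 (hβ : β ≠ 0) (g : Fin p ⊕ Unit → ℝ) :
    ((M0 p β).mulVec g) ⬝ᵥ (H0 p β).mulVec ((M0 p β).mulVec g) =
      g ⬝ᵥ (D0 p β).mulVec g := by
  have hp1 : (p : ℝ) + 1 ≠ 0 := by positivity
  rw [I1 hβ, Q0_mulVec, D0_mulVec, M0_mulVec, dot_sum_type, dot_sum_type]
  simp only [Sum.elim_inl, Sum.elim_inr]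
  set s := ∑ i, g (Sum.inl i) with hs
  set c := 1 / (p + 1 : ℝ) * (s - 1 / β * g (Sum.inr ())) with hc
  rw [Finset.sum_congr rfl (fun i _ => by ring :
    ∀ i ∈ Finset.univ, (g (Sum.inl i) - c) * (β * g (Sum.inl i) + g (Sum.inr ()))
      = β * (g (Sum.inl i) * g (Sum.inl i)) + (g (Sum.inr ()) - c * β) * g (Sum.inl i)
        - c * g (Sum.inr ()))]
  rw [Finset.sum_sub_distrib, Finset.sum_add_distrib, ← Finset.mul_sum, ← Finset.mul_sum,
    Finset.sum_const, Finset.card_univ, Fintype.card_fin, nsmul_eq_mul, ← hs]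
  rw [Finset.sum_congr rfl (fun i _ => by ring :
    ∀ i ∈ Finset.univ, g (Sum.inl i) * (β * g (Sum.inl i))
      = β * (g (Sum.inl i) * g (Sum.inl i)))]
  rw [← Finset.mul_sum]
  rw [hc]
  field_simp
  ring

lemma kron_mulVec (X : Matrix (Fin p ⊕ Unit) (Fin p ⊕ Unit) ℝ)
    (v : (Fin p ⊕ Unit) × Fin m → ℝ) (q : Fin p ⊕ Unit) (j : Fin m) :
    (X ⊗ₖ (1 : Matrix (Fin m) (Fin m) ℝ)).mulVec v (q, j) =
      ∑ q', X q q' * v (q', j) := by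
  simp only [Matrix.mulVec, dotProduct, Fintype.sum_prod_type,
    Matrix.kroneckerMap_apply, Matrix.one_apply, mul_ite, mul_one, mul_zero, ite_mul, zero_mul]
  simp [Finset.sum_ite_eq]

lemma kslice (X : Matrix (Fin p ⊕ Unit) (Fin p ⊕ Unit) ℝ)
    (v : (Fin p ⊕ Unit) × Fin m → ℝ) (j : Fin m) :
    (fun q => (X ⊗ₖ (1 : Matrix (Fin m) (Fin m) ℝ)).mulVec v (q, j)) =
      X.mulVec (fun q => v (q, j)) := by
  funext q
  rw [kron_mulVec]
  rfl

lemma kron_dot (X : Matrix (Fin p ⊕ Unit) (Fin p ⊕ Unit) ℝ)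
    (a v : (Fin p ⊕ Unit) × Fin m → ℝ) :
    a ⬝ᵥ (X ⊗ₖ (1 : Matrix (Fin m) (Fin m) ℝ)).mulVec v =
      ∑ j, (fun q => a (q, j)) ⬝ᵥ X.mulVec (fun q => v (q, j)) := by
  simp only [dotProduct, Fintype.sum_prod_type]
  rw [Finset.sum_comm]
  refine Finset.sum_congr rfl fun j _ => Finset.sum_congr rfl fun q _ => ?_
  rw [kron_mulVec]
  rfl

lemma K1 (hβ : β ≠ 0) (a v : (Fin p ⊕ Unit) × Fin m → ℝ) :
    a ⬝ᵥ (H0 p β ⊗ₖ (1 : Matrix (Fin m) (Fin m) ℝ)).mulVec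
        ((M0 p β ⊗ₖ (1 : Matrix (Fin m) (Fin m) ℝ)).mulVec v) =
      a ⬝ᵥ (Q0 p β ⊗ₖ (1 : Matrix (Fin m) (Fin m) ℝ)).mulVec v := by
  rw [kron_dot, kron_dot]
  refine Finset.sum_congr rfl fun j _ => ?_
  rw [kslice, I1 hβ]

lemma K2 (hβ : β ≠ 0) (v : (Fin p ⊕ Unit) × Fin m → ℝ) :
    ((M0 p β ⊗ₖ (1 : Matrix (Fin m) (Fin m) ℝ)).mulVec v) ⬝ᵥ
        (H0 p β ⊗ₖ (1 : Matrix (Fin m) (Fin m) ℝ)).mulVec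
          ((M0 p β ⊗ₖ (1 : Matrix (Fin m) (Fin m) ℝ)).mulVec v) =
      v ⬝ᵥ (D0 p β ⊗ₖ (1 : Matrix (Fin m) (Fin m) ℝ)).mulVec v := by
  rw [kron_dot, kron_dot]
  refine Finset.sum_congr rfl fun j _ => ?_
  rw [kslice, I2 hβ]

lemma K3 (a g : (Fin p ⊕ Unit) × Fin m → ℝ) :
    a ⬝ᵥ (H0 p β ⊗ₖ (1 : Matrix (Fin m) (Fin m) ℝ)).mulVec g =
      g ⬝ᵥ (H0 p β ⊗ₖ (1 : Matrix (Fin m) (Fin m) ℝ)).mulVec a := by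
  rw [kron_dot, kron_dot]
  exact Finset.sum_congr rfl fun j _ => I3 _ _

lemma K4 (v : (Fin p ⊕ Unit) × Fin m → ℝ) :
    v ⬝ᵥ (Q0 p β ⊗ₖ (1 : Matrix (Fin m) (Fin m) ℝ)).mulVec v =
      v ⬝ᵥ (D0 p β ⊗ₖ (1 : Matrix (Fin m) (Fin m) ℝ)).mulVec v := by
  rw [kron_dot, kron_dot]
  exact Finset.sum_congr rfl fun j _ => I4 _

lemma dot_self_nonneg' (v : Fin m → ℝ) : 0 ≤ v ⬝ᵥ v :=
  Finset.sum_nonneg fun _ _ => mul_self_nonneg _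

lemma small_t {C K : ℝ} (hK : 0 ≤ K)
    (h : ∀ t : ℝ, t ∈ Set.Ioc (0:ℝ) 1 → 0 ≤ t * C + t^2 * K) :
    0 ≤ C := by
  by_contra hC
  push_neg at hC
  set t : ℝ := min 1 (-C / (2 * K + 1)) with ht
  have ht0 : 0 < t := lt_min one_pos (div_pos (by linarith) (by linarith))
  have ht1 : t ≤ 1 := min_le_left _ _
  have ht2 : t ≤ -C / (2 * K + 1) := min_le_right _ _
  have := h t ⟨ht0, ht1⟩
  have htK : t * K ≤ -C / (2 * K + 1) * K := mul_le_mul_of_nonneg_right ht2 hK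
  have hlt : -C / (2 * K + 1) * K < -C := by
    rw [div_mul_eq_mul_div, div_lt_iff₀ (by positivity)]
    nlinarith
  nlinarith

lemma opt_lin {nn : ℕ} {θi : (Fin nn → ℝ) → ℝ} (hθ : ConvexOn ℝ Set.univ θi)
    {Xi : Set (Fin nn → ℝ)} (hXc : Convex ℝ Xi) (hβ : 0 < β)
    (Ai : Matrix (Fin m) (Fin nn) ℝ) (lam ui : Fin m → ℝ)
    {xt : Fin nn → ℝ} (hxt : xt ∈ Xi)
    (hopt : ∀ y ∈ Xi,
      θi xt - lam ⬝ᵥ Ai.mulVec xt +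
          β / 2 * ((Ai.mulVec xt - ui) ⬝ᵥ (Ai.mulVec xt - ui)) ≤
        θi y - lam ⬝ᵥ Ai.mulVec y +
          β / 2 * ((Ai.mulVec y - ui) ⬝ᵥ (Ai.mulVec y - ui)))
    {y : Fin nn → ℝ} (hy : y ∈ Xi) :
    0 ≤ θi y - θi xt -
        (Ai.mulVec y - Ai.mulVec xt) ⬝ᵥ (lam + β • (ui - Ai.mulVec xt)) := by
  set a := Ai.mulVec xt with ha
  set v := Ai.mulVec y - a with hv
  set C := θi y - θi xt - v ⬝ᵥ (lam + β • (ui - a)) with hC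
  have hK : 0 ≤ β / 2 * (v ⬝ᵥ v) := by
    have := dot_self_nonneg' v; positivity
  refine small_t hK ?_
  intro t ht
  have hyt : (1 - t) • xt + t • y ∈ Xi :=
    hXc hxt hy (by linarith [ht.2]) (le_of_lt ht.1) (by ring)
  have hθt : θi ((1 - t) • xt + t • y) ≤ (1 - t) * θi xt + t * θi y :=
    hθ.2 (Set.mem_univ xt) (Set.mem_univ y) (by linarith [ht.2]) (le_of_lt ht.1) (by ring)
  have hAyt : Ai.mulVec ((1 - t) • xt + t • y) = a + t • v := by
    rw [Matrix.mulVec_add, Matrix.mulVec_smul, Matrix.mulVec_smul]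
    funext j
    simp [hv, ha]
    ring
  have h2 := hopt _ hyt
  rw [hAyt] at h2
  have e1 : lam ⬝ᵥ (a + t • v) = lam ⬝ᵥ a + t * (lam ⬝ᵥ v) := by
    rw [dotProduct_add, dotProduct_smul]
    rfl
  have e2 : (a + t • v - ui) ⬝ᵥ (a + t • v - ui) =
      (a - ui) ⬝ᵥ (a - ui) + 2 * t * ((a - ui) ⬝ᵥ v) + t^2 * (v ⬝ᵥ v) := by
    have h3 : a + t • v - ui = (a - ui) + t • v := by abel
    rw [h3, add_dotProduct, dotProduct_add, dotProduct_add,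
      smul_dotProduct, dotProduct_smul, smul_dotProduct,
      dotProduct_comm v (a - ui)]
    simp [smul_eq_mul]
    ring
  have e3 : v ⬝ᵥ (lam + β • (ui - a)) = lam ⬝ᵥ v - β * ((a - ui) ⬝ᵥ v) := by
    rw [dotProduct_add, dotProduct_smul, dotProduct_comm v lam]
    have h4 : ui - a = -(a - ui) := by abel
    rw [h4, dotProduct_neg, dotProduct_comm v (a - ui)]
    simp [smul_eq_mul]
    ring
  rw [e1, e2] at h2
  rw [hC, e3]
  nlinarith [h2, hθt]

lemma perj (hβ : β ≠ 0) (a as u : Fin p → ℝ) (lam ls bb : ℝ) :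
    (∑ i, (a i - as i) * (β * (u i - a i) + (lam - (lam - β * ((∑ i, u i) - bb))))) +
      ((lam - β * ((∑ i, u i) - bb)) - ls) *
        (1 / β * (lam - (lam - β * ((∑ i, u i) - bb))) - ∑ i, (u i - a i)) =
    (∑ i, (a i - as i) * (lam + β * (u i - a i))) - (∑ i, (a i - as i) * ls) +
      ((lam - β * ((∑ i, u i) - bb)) - ls) * ((∑ i, as i) - bb) := by
  have e0 : 1 / β * (lam - (lam - β * ((∑ i, u i) - bb))) = (∑ i, u i) - bb := by
    field_simp
    ring
  rw [e0]
  have e1 : ∀ i, (a i - as i) * (β * (u i - a i) + (lam - (lam - β * ((∑ i, u i) - bb))))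
      = (a i - as i) * (β * (u i - a i)) + (β * ((∑ i, u i) - bb)) * a i
        - (β * ((∑ i, u i) - bb)) * as i := fun i => by ring
  have e2 : ∀ i, (a i - as i) * (lam + β * (u i - a i))
      = (a i - as i) * (β * (u i - a i)) + lam * a i - lam * as i := fun i => by ring
  have e3 : ∀ i, (a i - as i) * ls = ls * a i - ls * as i := fun i => by ring
  rw [Finset.sum_congr rfl (fun i _ => e1 i), Finset.sum_congr rfl (fun i _ => e2 i),
    Finset.sum_congr rfl (fun i _ => e3 i)]
  simp only [Finset.sum_sub_distrib, Finset.sum_add_distrib, ← Finset.mul_sum]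
  ring

lemma core (hβ : β ≠ 0)
    (a as u : Fin p → Fin m → ℝ) (lam lt ls bb : Fin m → ℝ)
    (hlt : ∀ j, lt j = lam j - β * ((∑ i, u i j) - bb j)) :
    ((fun q : (Fin p ⊕ Unit) × Fin m => Sum.elim (fun i => a i q.2) (fun _ => lt q.2) q.1)
        - (fun q : (Fin p ⊕ Unit) × Fin m => Sum.elim (fun i => as i q.2) (fun _ => ls q.2) q.1)) ⬝ᵥ
      (Q0 p β ⊗ₖ (1 : Matrix (Fin m) (Fin m) ℝ)).mulVec
      ((fun q : (Fin p ⊕ Unit) × Fin m => Sum.elim (fun i => u i q.2) (fun _ => lam q.2) q.1)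
        - (fun q : (Fin p ⊕ Unit) × Fin m => Sum.elim (fun i => a i q.2) (fun _ => lt q.2) q.1)) =
    (∑ i, (a i - as i) ⬝ᵥ (lam + β • (u i - a i)))
      - (∑ i, (a i - as i) ⬝ᵥ ls) + (lt - ls) ⬝ᵥ ((∑ i, as i) - bb) := by
  set vT : (Fin p ⊕ Unit) × Fin m → ℝ :=
    fun q => Sum.elim (fun i => a i q.2) (fun _ => lt q.2) q.1 with hvT
  set vS : (Fin p ⊕ Unit) × Fin m → ℝ :=
    fun q => Sum.elim (fun i => as i q.2) (fun _ => ls q.2) q.1 with hvS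
  set vK : (Fin p ⊕ Unit) × Fin m → ℝ :=
    fun q => Sum.elim (fun i => u i q.2) (fun _ => lam q.2) q.1 with hvK
  rw [kron_dot]
  have hL : ∀ j : Fin m,
      (fun q => (vT - vS) (q, j)) ⬝ᵥ (Q0 p β).mulVec (fun q => (vK - vT) (q, j))
      = (∑ i, (a i j - as i j) * (lam j + β * (u i j - a i j)))
        - (∑ i, (a i j - as i j) * ls j) + (lt j - ls j) * ((∑ i, as i j) - bb j) := by
    intro j
    rw [Q0_mulVec, dot_sum_type]
    simp only [Sum.elim_inl, Sum.elim_inr, Pi.sub_apply, hvT, hvS, hvK]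
    rw [hlt j]
    exact perj hβ (fun i => a i j) (fun i => as i j) (fun i => u i j) (lam j) (ls j) (bb j)
  rw [Finset.sum_congr rfl fun j _ => hL j]
  rw [Finset.sum_add_distrib, Finset.sum_sub_distrib]
  congr 1
  · congr 1
    · rw [Finset.sum_comm]
      refine Finset.sum_congr rfl fun i _ => ?_
      simp [dotProduct, smul_eq_mul]
    · rw [Finset.sum_comm]
      refine Finset.sum_congr rfl fun i _ => ?_
      simp [dotProduct]
  · simp [dotProduct, Finset.sum_apply]

end Aux

/-- If `w̃^k` is the output of the parallel splitting ALM step with input `ξ^k` and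
`ξ^{k+1} = ξ^k − αℳ(ξ^k − ξ̃^k)` with `α ∈ (0,2)`, then
`‖ξ^k − ξ^{k+1}‖²_ℋ = α²‖ξ^k − ξ̃^k‖²_𝒟` and for every `ξ* ∈ Ξ*`:
`‖ξ^{k+1} − ξ*‖²_ℋ ≤ ‖ξ^k − ξ*‖²_ℋ − ((2 − α)/α)‖ξ^k − ξ^{k+1}‖²_ℋ`. -/
theorem stmt19 {p m : ℕ} {n : Fin p → ℕ} (hp : 1 ≤ p)
    (θ : (i : Fin p) → (Fin (n i) → ℝ) → ℝ) (hθ : ∀ i, ConvexOn ℝ Set.univ (θ i))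
    (X : (i : Fin p) → Set (Fin (n i) → ℝ))
    (hXconv : ∀ i, Convex ℝ (X i)) (hXclosed : ∀ i, IsClosed (X i))
    (hXne : ∀ i, (X i).Nonempty)
    (A : (i : Fin p) → Matrix (Fin m) (Fin (n i)) ℝ) (b : Fin m → ℝ)
    {β : ℝ} (hβ : 0 < β) {α : ℝ} (hα : α ∈ Set.Ioo (0 : ℝ) 2)
    (ξk ξk1 : (Fin p ⊕ Unit) × Fin m → ℝ)
    (wt : ((i : Fin p) → Fin (n i) → ℝ) × (Fin m → ℝ))
    (hstep : ALMStep β θ X A b ξk wt)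
    (hrel : ξk1 = ξk - α • (calM p m β).mulVec (ξk - Pmap A wt)) :
    nsq (calH p m β) (ξk - ξk1) = α ^ 2 * nsq (calD p m β) (ξk - Pmap A wt) ∧
      ∀ ξs ∈ Pmap A '' VIsol θ X A b,
        nsq (calH p m β) (ξk1 - ξs) ≤
          nsq (calH p m β) (ξk - ξs) - (2 - α) / α * nsq (calH p m β) (ξk - ξk1) := by
  obtain ⟨hα0, hα2⟩ := hα
  have hβ' : β ≠ 0 := ne_of_gt hβ
  have hd1 : ξk - ξk1 = α • (calM p m β).mulVec (ξk - Pmap A wt) := by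
    rw [hrel]; exact sub_sub_cancel _ _
  set d : (Fin p ⊕ Unit) × Fin m → ℝ := ξk - Pmap A wt with hd
  have part1 : nsq (calH p m β) (ξk - ξk1) = α ^ 2 * nsq (calD p m β) d := by
    rw [hd1]
    unfold nsq calH calD calM
    rw [Matrix.mulVec_smul, smul_dotProduct, dotProduct_smul,
      K2 hβ' d]
    simp only [smul_eq_mul]
    ring
  refine ⟨part1, ?_⟩
  rintro ξs ⟨ws, hws, rfl⟩
  -- components
  have hPk : ξk = fun q : (Fin p ⊕ Unit) × Fin m =>
      Sum.elim (fun i => uOf ξk i q.2) (fun _ => lamOf ξk q.2) q.1 := by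
    funext q
    obtain ⟨q1, j⟩ := q
    cases q1 with
    | inl i => rfl
    | inr u => rfl
  have hlt : ∀ j, wt.2 j = lamOf ξk j - β * ((∑ i, uOf ξk i j) - b j) := by
    intro j
    rw [hstep.2]
    simp [Finset.sum_apply]
  -- the core VI inequality
  have hcoreineq : 0 ≤ (Pmap A wt - Pmap A ws) ⬝ᵥ (calQ p m β).mulVec d := by
    have heq := core (m := m) hβ' (fun i => (A i).mulVec (wt.1 i))
      (fun i => (A i).mulVec (ws.1 i)) (uOf ξk) (lamOf ξk) wt.2 ws.2 b hlt
    have h1 : ((fun q : (Fin p ⊕ Unit) × Fin m =>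
          Sum.elim (fun i => (A i).mulVec (wt.1 i) q.2) (fun _ => wt.2 q.2) q.1)
        - (fun q : (Fin p ⊕ Unit) × Fin m =>
          Sum.elim (fun i => (A i).mulVec (ws.1 i) q.2) (fun _ => ws.2 q.2) q.1))
        = Pmap A wt - Pmap A ws := rfl
    have h2 : ((fun q : (Fin p ⊕ Unit) × Fin m =>
          Sum.elim (fun i => uOf ξk i q.2) (fun _ => lamOf ξk q.2) q.1)
        - (fun q : (Fin p ⊕ Unit) × Fin m =>
          Sum.elim (fun i => (A i).mulVec (wt.1 i) q.2) (fun _ => wt.2 q.2) q.1)) = d := by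
      rw [hd, ← hPk]
      rfl
    rw [h1, h2] at heq
    have heq' : (Pmap A wt - Pmap A ws) ⬝ᵥ (calQ p m β).mulVec d =
        (∑ i, ((A i).mulVec (wt.1 i) - (A i).mulVec (ws.1 i)) ⬝ᵥ
            (lamOf ξk + β • (uOf ξk i - (A i).mulVec (wt.1 i))))
          - (∑ i, ((A i).mulVec (wt.1 i) - (A i).mulVec (ws.1 i)) ⬝ᵥ ws.2)
          + (wt.2 - ws.2) ⬝ᵥ ((∑ i, (A i).mulVec (ws.1 i)) - b) := heq
    rw [heq']
    -- optimality of each block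
    have hS : ∀ i, 0 ≤ θ i (ws.1 i) - θ i (wt.1 i) -
        ((A i).mulVec (ws.1 i) - (A i).mulVec (wt.1 i)) ⬝ᵥ
          (lamOf ξk + β • (uOf ξk i - (A i).mulVec (wt.1 i))) := fun i =>
      opt_lin (hθ i) (hXconv i) hβ (A i) (lamOf ξk) (uOf ξk i) (hstep.1 i).1
        (hstep.1 i).2 (hws.1 i)
    have hSval : 0 ≤ ∑ i, (θ i (ws.1 i) - θ i (wt.1 i) -
        ((A i).mulVec (ws.1 i) - (A i).mulVec (wt.1 i)) ⬝ᵥ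
          (lamOf ξk + β • (uOf ξk i - (A i).mulVec (wt.1 i)))) :=
      Finset.sum_nonneg fun i _ => hS i
    have hwtΩ : wt ∈ OmegaSet m X := fun i => (hstep.1 i).1
    have hT : 0 ≤ thetaSum θ wt.1 - thetaSum θ ws.1 + dotW (wt - ws) (Fop A b ws) :=
      hws.2 wt hwtΩ
    -- rewrite dotW
    have hdw : dotW (wt - ws) (Fop A b ws) =
        (∑ i, -(((A i).mulVec (wt.1 i) - (A i).mulVec (ws.1 i)) ⬝ᵥ ws.2))
          + (wt.2 - ws.2) ⬝ᵥ ((∑ i, (A i).mulVec (ws.1 i)) - b) := by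
      unfold dotW Fop
      congr 1
      refine Finset.sum_congr rfl fun i _ => ?_
      show (wt.1 i - ws.1 i) ⬝ᵥ (-(A i)ᵀ.mulVec ws.2) = _
      rw [dotProduct_neg, Matrix.dotProduct_mulVec, Matrix.vecMul_transpose,
        Matrix.mulVec_sub, sub_dotProduct]
    have hAi : ∀ i, ((A i).mulVec (ws.1 i) - (A i).mulVec (wt.1 i)) ⬝ᵥ
          (lamOf ξk + β • (uOf ξk i - (A i).mulVec (wt.1 i)))
        = -(((A i).mulVec (wt.1 i) - (A i).mulVec (ws.1 i)) ⬝ᵥ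
          (lamOf ξk + β • (uOf ξk i - (A i).mulVec (wt.1 i)))) := fun i => by
      rw [← neg_dotProduct, neg_sub]
    have hfin : (∑ i, ((A i).mulVec (wt.1 i) - (A i).mulVec (ws.1 i)) ⬝ᵥ
            (lamOf ξk + β • (uOf ξk i - (A i).mulVec (wt.1 i))))
          - (∑ i, ((A i).mulVec (wt.1 i) - (A i).mulVec (ws.1 i)) ⬝ᵥ ws.2)
          + (wt.2 - ws.2) ⬝ᵥ ((∑ i, (A i).mulVec (ws.1 i)) - b)
        = (∑ i, (θ i (ws.1 i) - θ i (wt.1 i) -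
            ((A i).mulVec (ws.1 i) - (A i).mulVec (wt.1 i)) ⬝ᵥ
              (lamOf ξk + β • (uOf ξk i - (A i).mulVec (wt.1 i)))))
          + (thetaSum θ wt.1 - thetaSum θ ws.1 + dotW (wt - ws) (Fop A b ws)) := by
      rw [hdw]
      unfold thetaSum
      rw [Finset.sum_congr rfl fun i _ => congrArg
        (fun z => θ i (ws.1 i) - θ i (wt.1 i) - z) (hAi i)]
      simp only [Finset.sum_sub_distrib, Finset.sum_neg_distrib]
      ring
    rw [hfin]
    linarith
  -- assembly
  set e : (Fin p ⊕ Unit) × Fin m → ℝ := ξk - Pmap A ws with he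
  have hQd : d ⬝ᵥ (calQ p m β).mulVec d ≤ e ⬝ᵥ (calQ p m β).mulVec d := by
    have hsplit : e = d + (Pmap A wt - Pmap A ws) := by
      rw [he, hd]; abel
    rw [hsplit, add_dotProduct]
    linarith
  have hx : ξk1 - Pmap A ws = e - α • (calM p m β).mulVec d := by
    rw [hrel, he, hd]
    abel
  have expandH : ∀ ee w : (Fin p ⊕ Unit) × Fin m → ℝ,
      (ee - α • w) ⬝ᵥ (calH p m β).mulVec (ee - α • w) =
        ee ⬝ᵥ (calH p m β).mulVec ee - 2 * α * (ee ⬝ᵥ (calH p m β).mulVec w)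
          + α ^ 2 * (w ⬝ᵥ (calH p m β).mulVec w) := by
    intro ee w
    simp only [Matrix.mulVec_sub, Matrix.mulVec_smul, sub_dotProduct,
      dotProduct_sub, smul_dotProduct, dotProduct_smul, smul_eq_mul]
    have hsym : w ⬝ᵥ (calH p m β).mulVec ee = ee ⬝ᵥ (calH p m β).mulVec w := K3 _ _
    rw [hsym]
    ring
  have expand : nsq (calH p m β) (ξk1 - Pmap A ws) =
      nsq (calH p m β) e
        - 2 * α * (e ⬝ᵥ (calH p m β).mulVec ((calM p m β).mulVec d))
        + α ^ 2 * (((calM p m β).mulVec d) ⬝ᵥ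
            (calH p m β).mulVec ((calM p m β).mulVec d)) := by
    rw [hx]
    exact expandH e ((calM p m β).mulVec d)
  have hK1' : e ⬝ᵥ (calH p m β).mulVec ((calM p m β).mulVec d)
      = e ⬝ᵥ (calQ p m β).mulVec d := K1 hβ' e d
  have hK2' : ((calM p m β).mulVec d) ⬝ᵥ (calH p m β).mulVec ((calM p m β).mulVec d)
      = d ⬝ᵥ (calD p m β).mulVec d := K2 hβ' d
  have hK4' : d ⬝ᵥ (calQ p m β).mulVec d = d ⬝ᵥ (calD p m β).mulVec d := K4 d
  rw [expand, hK1', hK2', part1]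
  have hfrac : (2 - α) / α * (α ^ 2 * nsq (calD p m β) d)
      = (2 - α) * α * (d ⬝ᵥ (calD p m β).mulVec d) := by
    have : nsq (calD p m β) d = d ⬝ᵥ (calD p m β).mulVec d := rfl
    rw [this]
    field_simp
  rw [hfrac]
  have hmono : 2 * α * (d ⬝ᵥ (calD p m β).mulVec d) ≤
      2 * α * (e ⬝ᵥ (calQ p m β).mulVec d) := by
    have h0 : d ⬝ᵥ (calD p m β).mulVec d ≤ e ⬝ᵥ (calQ p m β).mulVec d := by
      rw [← hK4']; exact hQd
    nlinarith
  have : nsq (calH p m β) e = e ⬝ᵥ (calH p m β).mulVec e := rfl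
  nlinarith [hmono]
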